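/- Suppose L_u, L_v, L_{uv}, L_{vu} > 0, τ ≥ 1, and η_u ≤ 1/(√6 · τ · L_u · max{1, (L_{vu}L_{uv})/(L_u L_v)}), η_v ≤ 1/(√6 · τ · L_v · max{1, (L_{vu}L_{uv})/(L_u L_v)}). Define A = L_u² η_u + L_{vu}² η_v and B = L_v² η_v + L_{uv}² η_u. Then 3τ²η_u²L_u²A + 3τ²η_v²L_{vu}²B ≤ A. -/
import Mathlib


set_option maxHeartbeats 1000000 in
theorem lemma7_first (Lu Lv Luv Lvu τ ηu ηv : ℝ)
    (hLu : 0 < Lu) (hLv : 0 < Lv) (hLuv : 0 < Luv) (hLvu : 0 < Lvu)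
    (hτ : 1 ≤ τ) (hηu : 0 < ηu) (hηv : 0 < ηv)
    (hu : ηu ≤ 1 / (Real.sqrt 6 * τ * Lu * max 1 (Lvu * Luv / (Lu * Lv))))
    (hv : ηv ≤ 1 / (Real.sqrt 6 * τ * Lv * max 1 (Lvu * Luv / (Lu * Lv)))) :
    3 * τ ^ 2 * ηu ^ 2 * Lu ^ 2 * (Lu ^ 2 * ηu + Lvu ^ 2 * ηv)
      + 3 * τ ^ 2 * ηv ^ 2 * Lvu ^ 2 * (Lv ^ 2 * ηv + Luv ^ 2 * ηu)
      ≤ Lu ^ 2 * ηu + Lvu ^ 2 * ηv := by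
  set M : ℝ := max 1 (Lvu * Luv / (Lu * Lv)) with hMdef
  have hM1 : (1:ℝ) ≤ M := le_max_left _ _
  have hM0 : 0 < M := lt_of_lt_of_le one_pos hM1
  have hs : Real.sqrt 6 ^ 2 = 6 := Real.sq_sqrt (by norm_num)
  have hs0 : 0 < Real.sqrt 6 := Real.sqrt_pos.mpr (by norm_num)
  have hτ0 : 0 < τ := lt_of_lt_of_le one_pos hτ
  have hM3 : Lvu * Luv ≤ M * (Lu * Lv) := by
    have := le_max_right 1 (Lvu * Luv / (Lu * Lv))
    calc Lvu * Luv = (Lvu * Luv / (Lu * Lv)) * (Lu * Lv) := by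
          field_simp
      _ ≤ M * (Lu * Lv) := by
          apply mul_le_mul_of_nonneg_right this (by positivity)
  clear_value M
  -- squared bounds
  have hdu : 0 < Real.sqrt 6 * τ * Lu * M := by positivity
  have hdv : 0 < Real.sqrt 6 * τ * Lv * M := by positivity
  have hu' : Real.sqrt 6 * τ * Lu * M * ηu ≤ 1 := by
    calc Real.sqrt 6 * τ * Lu * M * ηu
        ≤ Real.sqrt 6 * τ * Lu * M * (1 / (Real.sqrt 6 * τ * Lu * M)) := by
          exact mul_le_mul_of_nonneg_left hu (le_of_lt hdu)
      _ = 1 := by field_simp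
  have hv' : Real.sqrt 6 * τ * Lv * M * ηv ≤ 1 := by
    calc Real.sqrt 6 * τ * Lv * M * ηv
        ≤ Real.sqrt 6 * τ * Lv * M * (1 / (Real.sqrt 6 * τ * Lv * M)) := by
          exact mul_le_mul_of_nonneg_left hv (le_of_lt hdv)
      _ = 1 := by field_simp
  have h1 : 6 * (τ * Lu * M * ηu) ^ 2 ≤ 1 := by
    have := mul_le_mul hu' hu' (by positivity) (by norm_num)
    nlinarith [hs]
  have h2 : 6 * (τ * Lv * M * ηv) ^ 2 ≤ 1 := by
    have := mul_le_mul hv' hv' (by positivity) (by norm_num)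
    nlinarith [hs]
  have h1' : 6 * (τ * Lu * ηu) ^ 2 ≤ 1 := by
    nlinarith [h1, mul_nonneg (by nlinarith : (0:ℝ) ≤ M^2 - 1) (sq_nonneg (τ*Lu*ηu))]
  have h2' : 6 * (τ * Lv * ηv) ^ 2 ≤ 1 := by
    nlinarith [h2, mul_nonneg (by nlinarith : (0:ℝ) ≤ M^2 - 1) (sq_nonneg (τ*Lv*ηv))]
  -- four pieces
  have t1 : 3 * τ ^ 2 * ηu ^ 2 * Lu ^ 2 * (Lu ^ 2 * ηu) ≤ (1/2) * (Lu ^ 2 * ηu) :=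
    calc 3 * τ ^ 2 * ηu ^ 2 * Lu ^ 2 * (Lu ^ 2 * ηu)
        = (6 * (τ * Lu * ηu) ^ 2) * ((Lu ^ 2 * ηu) / 2) := by ring
      _ ≤ 1 * ((Lu ^ 2 * ηu) / 2) := mul_le_mul_of_nonneg_right h1' (by positivity)
      _ = (1/2) * (Lu ^ 2 * ηu) := by ring
  have t2 : 3 * τ ^ 2 * ηu ^ 2 * Lu ^ 2 * (Lvu ^ 2 * ηv) ≤ (1/2) * (Lvu ^ 2 * ηv) :=
    calc 3 * τ ^ 2 * ηu ^ 2 * Lu ^ 2 * (Lvu ^ 2 * ηv)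
        = (6 * (τ * Lu * ηu) ^ 2) * ((Lvu ^ 2 * ηv) / 2) := by ring
      _ ≤ 1 * ((Lvu ^ 2 * ηv) / 2) := mul_le_mul_of_nonneg_right h1' (by positivity)
      _ = (1/2) * (Lvu ^ 2 * ηv) := by ring
  have t3 : 3 * τ ^ 2 * ηv ^ 2 * Lvu ^ 2 * (Lv ^ 2 * ηv) ≤ (1/2) * (Lvu ^ 2 * ηv) :=
    calc 3 * τ ^ 2 * ηv ^ 2 * Lvu ^ 2 * (Lv ^ 2 * ηv)
        = (6 * (τ * Lv * ηv) ^ 2) * ((Lvu ^ 2 * ηv) / 2) := by ring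
      _ ≤ 1 * ((Lvu ^ 2 * ηv) / 2) := mul_le_mul_of_nonneg_right h2' (by positivity)
      _ = (1/2) * (Lvu ^ 2 * ηv) := by ring
  have t4 : 3 * τ ^ 2 * ηv ^ 2 * Lvu ^ 2 * (Luv ^ 2 * ηu) ≤ (1/2) * (Lu ^ 2 * ηu) := by
    have hsq : (Lvu * Luv) ^ 2 ≤ (M * (Lu * Lv)) ^ 2 :=
      pow_le_pow_left₀ (by positivity) hM3 2
    calc 3 * τ ^ 2 * ηv ^ 2 * Lvu ^ 2 * (Luv ^ 2 * ηu)
        = (Lvu * Luv) ^ 2 * (3 * τ ^ 2 * ηv ^ 2 * ηu) := by ring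
      _ ≤ (M * (Lu * Lv)) ^ 2 * (3 * τ ^ 2 * ηv ^ 2 * ηu) :=
          mul_le_mul_of_nonneg_right hsq (by positivity)
      _ = (6 * (τ * Lv * M * ηv) ^ 2) * ((Lu ^ 2 * ηu) / 2) := by ring
      _ ≤ 1 * ((Lu ^ 2 * ηu) / 2) := mul_le_mul_of_nonneg_right h2 (by positivity)
      _ = (1/2) * (Lu ^ 2 * ηu) := by ring
  linarith [t1, t2, t3, t4]
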